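/- Let R be a B-algebra, where B is a complete Hausdorff topological field of characteristic zero, and equip R (and each affine space Rⁿ) with the inductive limit topology from finite-dimensional B-subspaces. Then any polynomial map f : Rⁿ → Rᵏ (each coordinate given by a polynomial with coefficients in R) is continuous. -/

import Mathlib

set_option linter.unusedSectionVars false


/-- The canonical topology on a finite-dimensional vector space `V` over a
topological field `B`. -/
noncomputable def canonicalFDTopology (B V : Type*) [Field B] [TopologicalSpace B]
    [AddCommGroup V] [Module B V] [FiniteDimensional B V] : TopologicalSpace V :=
  TopologicalSpace.induced (Module.finBasis B V).equivFun Pi.topologicalSpace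

/-- The inductive limit topology on a `B`-vector space `R` coming from its
finite-dimensional subspaces. -/
noncomputable def indLimTopology (B R : Type*) [Field B] [TopologicalSpace B]
    [AddCommGroup R] [Module B R] : TopologicalSpace R :=
  ⨆ (V : Submodule B R) (h : FiniteDimensional B V),
    TopologicalSpace.coinduced (Subtype.val : V → R) (@canonicalFDTopology B V _ _ _ _ h)

section Good
variable {B : Type*} [Field B] [TopologicalSpace B] [IsTopologicalRing B]
variable {R : Type*} [CommRing R] [Algebra B R] {d : ℕ}

def IsGoodFn (d : ℕ) (B R : Type*) [Field B] [TopologicalSpace B] [CommRing R] [Algebra B R]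
    (f : (Fin d → B) → R) : Prop :=
  ∃ W : Submodule B R, FiniteDimensional B W ∧ (∀ c, f c ∈ W) ∧
    ∀ ℓ : R →ₗ[B] B, Continuous fun c => ℓ (f c)

theorem isGoodFn_const (a : R) : IsGoodFn d B R (fun _ => a) :=
  ⟨B ∙ a, inferInstance, fun _ => Submodule.mem_span_singleton_self a,
    fun _ => continuous_const⟩

theorem isGoodFn_linear (ψ : (Fin d → B) →ₗ[B] R) : IsGoodFn d B R (fun c => ψ c) :=
  ⟨LinearMap.range ψ, inferInstance, fun c => LinearMap.mem_range_self ψ c,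
    fun ℓ => (ℓ.comp ψ).continuous_on_pi⟩

theorem IsGoodFn.add {f g : (Fin d → B) → R} (hf : IsGoodFn d B R f) (hg : IsGoodFn d B R g) :
    IsGoodFn d B R (fun c => f c + g c) := by
  obtain ⟨W₁, h₁, hm₁, hc₁⟩ := hf
  obtain ⟨W₂, h₂, hm₂, hc₂⟩ := hg
  haveI := h₁; haveI := h₂
  refine ⟨W₁ ⊔ W₂, inferInstance, fun c =>
    Submodule.add_mem _ (Submodule.mem_sup_left (hm₁ c)) (Submodule.mem_sup_right (hm₂ c)),
    fun ℓ => ?_⟩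
  simpa [map_add, Pi.add_def] using (hc₁ ℓ).add (hc₂ ℓ)

theorem IsGoodFn.mul {f g : (Fin d → B) → R} (hf : IsGoodFn d B R f) (hg : IsGoodFn d B R g) :
    IsGoodFn d B R (fun c => f c * g c) := by
  obtain ⟨W₁, h₁, hm₁, hc₁⟩ := hf
  obtain ⟨W₂, h₂, hm₂, hc₂⟩ := hg
  haveI := h₁; haveI := h₂
  have hfd : FiniteDimensional B ↥(W₁ * W₂) := by
    rw [← Submodule.fg_iff_finiteDimensional]
    exact Submodule.FG.mul ((Submodule.fg_iff_finiteDimensional W₁).2 h₁)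
      ((Submodule.fg_iff_finiteDimensional W₂).2 h₂)
  refine ⟨W₁ * W₂, hfd, fun c => Submodule.mul_mem_mul (hm₁ c) (hm₂ c), fun ℓ => ?_⟩
  classical
  set b := Module.finBasis B W₁ with hb
  have hext : ∀ s, ∃ κ : R →ₗ[B] B, κ.comp W₁.subtype = b.coord s :=
    fun s => LinearMap.exists_extend _
  choose κ hκ using hext
  have key : ∀ c, ℓ (f c * g c) =
      ∑ s, κ s (f c) * ℓ ((b s : R) * g c) := by
    intro c
    have hfc : f c = ∑ s, (b.repr ⟨f c, hm₁ c⟩ s) • (b s : R) := by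
      have := congrArg (W₁.subtype) (b.sum_repr ⟨f c, hm₁ c⟩)
      simpa only [map_sum, map_smul, Submodule.subtype_apply, Submodule.coe_mk] using this.symm
    have hκ' : ∀ s, κ s (f c) = b.repr ⟨f c, hm₁ c⟩ s := by
      intro s
      have := LinearMap.congr_fun (hκ s) ⟨f c, hm₁ c⟩
      simpa [Module.Basis.coord_apply] using this
    calc ℓ (f c * g c) = ℓ ((∑ s, (b.repr ⟨f c, hm₁ c⟩ s) • (b s : R)) * g c) := by rw [← hfc]
      _ = ∑ s, (b.repr ⟨f c, hm₁ c⟩ s) • ℓ ((b s : R) * g c) := by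
          rw [Finset.sum_mul, map_sum]
          exact Finset.sum_congr rfl fun s _ => by rw [smul_mul_assoc, map_smul]
      _ = ∑ s, κ s (f c) * ℓ ((b s : R) * g c) :=
          Finset.sum_congr rfl fun s _ => by rw [hκ' s, smul_eq_mul]
  simp only [key]
  refine continuous_finset_sum _ fun s _ => ?_
  exact (hc₁ (κ s)).mul (hc₂ (ℓ.comp (LinearMap.mul B R (b s : R))))

theorem isGoodFn_eval {n : ℕ} (x : Fin n → ((Fin d → B) → R)) (hx : ∀ i, IsGoodFn d B R (x i))
    (q : MvPolynomial (Fin n) R) :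
    IsGoodFn d B R (fun c => MvPolynomial.eval (fun i => x i c) q) := by
  induction q using MvPolynomial.induction_on with
  | C a => simpa [MvPolynomial.eval_C] using isGoodFn_const (R := R) (d := d) a
  | add q₁ q₂ ih₁ ih₂ => simpa [map_add] using ih₁.add ih₂
  | mul_X q i ih => simpa [MvPolynomial.eval_mul, MvPolynomial.eval_X] using ih.mul (hx i)

theorem continuous_indLim_of_isGoodFn {d k : ℕ} (f : Fin k → ((Fin d → B) → R))
    (hf : ∀ j, IsGoodFn d B R (f j)) :
    @Continuous (Fin d → B) (Fin k → R) Pi.topologicalSpace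
      (indLimTopology B (Fin k → R)) (fun c j => f j c) := by
  classical
  choose W hW hmem hcont using hf
  haveI : ∀ j, FiniteDimensional B (W j) := hW
  set U : Submodule B R := ⨆ j, W j with hU
  set Φ : (Fin k → ↥U) →ₗ[B] (Fin k → R) :=
    LinearMap.pi (fun j => U.subtype.comp (LinearMap.proj j)) with hΦ
  set U' : Submodule B (Fin k → R) := LinearMap.range Φ with hU'
  haveI : FiniteDimensional B ↥U' := inferInstance
  have hmemU' : ∀ c, (fun j => f j c) ∈ U' := by
    intro c
    exact ⟨fun j => ⟨f j c, (le_iSup W j) (hmem j c)⟩, rfl⟩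
  set g' : (Fin d → B) → ↥U' := fun c => ⟨fun j => f j c, hmemU' c⟩ with hg'
  have step1 : @Continuous (Fin d → B) ↥U' Pi.topologicalSpace
      (canonicalFDTopology B ↥U') g' := by
    unfold canonicalFDTopology
    apply continuous_induced_rng.2
    apply continuous_pi
    intro s
    obtain ⟨L, hL⟩ := LinearMap.exists_extend ((Module.finBasis B ↥U').coord s)
    have hrw : (fun c => (Module.finBasis B ↥U').equivFun (g' c) s)
        = fun c => ∑ j, (L.comp (LinearMap.single B (fun _ => R) j)) (f j c) := by
      funext c
      have h1 : (Module.finBasis B ↥U').equivFun (g' c) s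
          = (Module.finBasis B ↥U').coord s (g' c) := rfl
      have h2 := LinearMap.congr_fun hL (g' c)
      have h3 : ((g' c : Fin k → R)) = ∑ j, Pi.single j (f j c) :=
        (Finset.univ_sum_single _).symm
      rw [h1, ← h2]
      show L ((g' c : Fin k → R)) = _
      rw [h3, map_sum]
      exact Finset.sum_congr rfl fun j _ => by simp [LinearMap.single_apply]
    show Continuous fun c => (Module.finBasis B ↥U').equivFun (g' c) s
    rw [hrw]
    exact continuous_finset_sum _ fun j _ =>
      hcont j (L.comp (LinearMap.single B (fun _ => R) j))
  have step2 : @Continuous ↥U' (Fin k → R) (canonicalFDTopology B ↥U')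
      (indLimTopology B (Fin k → R)) Subtype.val := by
    unfold indLimTopology
    exact continuous_iSup_rng (i := U')
      (continuous_iSup_rng (i := ‹FiniteDimensional B ↥U'›) continuous_coinduced_rng)
  exact @Continuous.comp (Fin d → B) ↥U' (Fin k → R) Pi.topologicalSpace
    (canonicalFDTopology B ↥U') (indLimTopology B (Fin k → R)) _ _ step2 step1

end Good

/-- For a `B`-algebra `R` over a complete Hausdorff topological
field `B` of characteristic zero, with `Rⁿ` and `Rᵏ` carrying the inductive
limit topology from finite-dimensional `B`-subspaces, every polynomial map
`Rⁿ → Rᵏ` (each coordinate given by a polynomial with coefficients in `R`) is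
continuous. -/
theorem polynomial_map_continuous_indLim {B : Type*} [Field B] [UniformSpace B]
    [CompleteSpace B] [T2Space B] [IsTopologicalRing B] [CharZero B]
    {R : Type*} [CommRing R] [Algebra B R]
    (n k : ℕ) (p : Fin k → MvPolynomial (Fin n) R) :
    @Continuous (Fin n → R) (Fin k → R)
      (indLimTopology B (Fin n → R)) (indLimTopology B (Fin k → R))
      (fun x j => MvPolynomial.eval x (p j)) := by
  classical
  unfold indLimTopology
  rw [continuous_iSup_dom]
  intro V
  rw [continuous_iSup_dom]
  intro hV
  rw [continuous_coinduced_dom]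
  haveI := hV
  set d : ℕ := Module.finrank B ↥V with hd
  set eV := (Module.finBasis B ↥V).equivFun with heV
  set x : Fin n → ((Fin d → B) → R) :=
    fun i c => ((LinearMap.proj i).comp (V.subtype.comp (eV.symm.toLinearMap))) c with hx
  have hgood : ∀ j, IsGoodFn d B R (fun c => MvPolynomial.eval (fun i => x i c) (p j)) :=
    fun j => isGoodFn_eval x (fun i => isGoodFn_linear _) (p j)
  have h1 := continuous_indLim_of_isGoodFn _ hgood
  unfold indLimTopology at h1
  have h2 : @Continuous ↥V (Fin d → B) (@canonicalFDTopology B ↥V _ _ _ _ hV)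
      Pi.topologicalSpace eV := by
    unfold canonicalFDTopology
    exact continuous_induced_dom
  have h3 := @Continuous.comp ↥V (Fin d → B) (Fin k → R)
    (@canonicalFDTopology B ↥V _ _ _ _ hV) Pi.topologicalSpace
    (⨆ (V : Submodule B (Fin k → R)) (h : FiniteDimensional B V),
      TopologicalSpace.coinduced (Subtype.val : V → Fin k → R)
        (@canonicalFDTopology B V _ _ _ _ h)) _ _ h1 h2
  have heq : ((fun (c : Fin d → B) (j : Fin k) => MvPolynomial.eval (fun i => x i c) (p j)) ∘ eV)
      = ((fun (x : Fin n → R) (j : Fin k) => MvPolynomial.eval x (p j)) ∘ (Subtype.val : V → Fin n → R)) := by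
    funext v
    have harg : (fun i => x i (eV v)) = (v : Fin n → R) := by
      funext i
      simp [hx, LinearEquiv.symm_apply_apply]
    simp only [Function.comp_apply, harg]
  rw [heq] at h3
  exact h3
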